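/- The master-formula λ-bracket is skewsymmetric, i.e. B_{−T}(g,f) = −S^{−T}(B_T(f,g)) for all f, g ∈ A and all T ∈ ℤ^D, if and only if the skewsymmetry condition holds on generators, i.e. P^{ji}_{−T} = −S^{−T}(P^{ij}_T) for all i, j ∈ {1,…,ℓ} and all T ∈ ℤ^D. -/

import Mathlib

open MvPolynomial

namespace MPVA

/-- The algebra of difference polynomials in `ℓ` generators on a `D`-dimensional lattice:
polynomials over `ℂ` in the variables `u^i_N`, `i ∈ Fin ℓ`, `N ∈ ℤ^D`. -/
abbrev A (ℓ D : ℕ) := MvPolynomial (Fin ℓ × (Fin D → ℤ)) ℂ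

variable {ℓ D : ℕ}

/-- The shift automorphism `S^M` sending `u^i_N` to `u^i_{N+M}`. -/
noncomputable def Sh (M : Fin D → ℤ) : A ℓ D ≃ₐ[ℂ] A ℓ D :=
  renameEquiv ℂ ((Equiv.refl (Fin ℓ)).prodCongr (Equiv.addRight M))

/-- The `α`-th standard basis vector `E_α ∈ ℤ^D`. -/
def E (α : Fin D) : Fin D → ℤ := fun β => if β = α then 1 else 0

/-- Coefficient `B_T(f,g)` of `λ^T` in the master-formula λ-bracket `{f_λ g}` determined
by the generator coefficients `{u^i_λ u^j} = Σ_T (P j i T)·λ^T`: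
`{f_λ g} = Σ_{i,j,M,N,T'} (∂g/∂u^j_N)·S^N(P^{ji}_{T'})·S^{N+T'−M}(∂f/∂u^i_M)·λ^{N+T'−M}`. -/
noncomputable def B (P : Fin ℓ → Fin ℓ → (Fin D → ℤ) → A ℓ D)
    (T : Fin D → ℤ) (f g : A ℓ D) : A ℓ D :=
  ∑ᶠ (i : Fin ℓ) (j : Fin ℓ) (M : Fin D → ℤ) (N : Fin D → ℤ),
    (pderiv (j, N) g) * (Sh N (P j i (T - N + M))) * (Sh T (pderiv (i, M) f))

/-- The family of generator coefficients has only finitely many nonzero members. -/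
def FinSupp (P : Fin ℓ → Fin ℓ → (Fin D → ℤ) → A ℓ D) : Prop :=
  {x : (Fin ℓ × Fin ℓ) × (Fin D → ℤ) | P x.1.1 x.1.2 x.2 ≠ 0}.Finite

/-- The PVA-Jacobi identity for the triple `(f,g,h)`, written coefficient-wise
(for all `T, U ∈ ℤ^D`, the coefficient of `λ^T μ^U` in
`Σ_U {f_λ B_U(g,h)}μ^U − Σ_T {g_μ B_T(f,h)}λ^T = Σ_{T,U} B_U(B_T(f,g),h)λ^{T+U}μ^U`). -/
def Jacobi (P : Fin ℓ → Fin ℓ → (Fin D → ℤ) → A ℓ D) (f g h : A ℓ D) : Prop :=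
  ∀ T U : Fin D → ℤ,
    B P T f (B P U g h) - B P U g (B P T f h) = B P U (B P (T - U) f g) h

lemma Sh_apply (M : Fin D → ℤ) (p : A ℓ D) :
    Sh M p = rename (fun v : Fin ℓ × (Fin D → ℤ) => (v.1, v.2 + M)) p := rfl
lemma Sh_Sh (M N : Fin D → ℤ) (p : A ℓ D) : Sh M (Sh N p) = Sh (N + M) p := by
  simp only [Sh_apply, rename_rename]
  have : ((fun v : Fin ℓ × (Fin D → ℤ) => (v.1, v.2 + M)) ∘
      fun v : Fin ℓ × (Fin D → ℤ) => (v.1, v.2 + N)) =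
      fun v : Fin ℓ × (Fin D → ℤ) => (v.1, v.2 + (N + M)) := by
    funext v; simp [add_assoc]
  rw [this]
lemma Sh_zero (p : A ℓ D) : Sh (0 : Fin D → ℤ) p = p := by
  rw [Sh_apply]
  have : (fun v : Fin ℓ × (Fin D → ℤ) => (v.1, v.2 + 0)) = id := by funext v; simp
  rw [this, rename_id, AlgHom.id_apply]
lemma finsum4 (G : Fin ℓ → Fin ℓ → (Fin D → ℤ) → (Fin D → ℤ) → A ℓ D)
    (sM sN : Finset (Fin D → ℤ))
    (h : ∀ i j M N, G i j M N ≠ 0 → M ∈ sM ∧ N ∈ sN) :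
    (∑ᶠ (i : Fin ℓ) (j : Fin ℓ) (M : Fin D → ℤ) (N : Fin D → ℤ), G i j M N)
      = ∑ i : Fin ℓ, ∑ j : Fin ℓ, ∑ M ∈ sM, ∑ N ∈ sN, G i j M N := by
  rw [finsum_eq_sum_of_fintype]
  refine Finset.sum_congr rfl fun i _ => ?_
  rw [finsum_eq_sum_of_fintype]
  refine Finset.sum_congr rfl fun j _ => ?_
  have hN : ∀ M, (∑ᶠ N, G i j M N) = ∑ N ∈ sN, G i j M N := fun M =>
    finsum_eq_finset_sum_of_support_subset _ (fun N hn => (h i j M N hn).2)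
  have h1 : (∑ᶠ (M : Fin D → ℤ) (N : Fin D → ℤ), G i j M N)
      = ∑ M ∈ sM, ∑ᶠ (N : Fin D → ℤ), G i j M N := by
    refine finsum_eq_finset_sum_of_support_subset _ (fun M hM => ?_)
    by_contra hMs
    apply hM
    have hz : ∀ N, G i j M N = 0 := fun N => by
      by_contra h0; exact hMs ((h i j M N h0).1)
    simp only [hz, finsum_zero]
  rw [h1]
  exact Finset.sum_congr rfl fun M _ => hN M
lemma B_gen (P : Fin ℓ → Fin ℓ → (Fin D → ℤ) → A ℓ D) (a b : Fin ℓ) (T : Fin D → ℤ) :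
    B P T (X (a, (0 : Fin D → ℤ))) (X (b, (0 : Fin D → ℤ))) = P b a T := by
  rw [B, finsum4 _ {0} {0}]
  · have key : ∀ i j : Fin ℓ,
        (pderiv (j, (0 : Fin D → ℤ)) (X (b, (0 : Fin D → ℤ))) : A ℓ D)
          * (Sh 0 (P j i (T - 0 + 0)))
          * (Sh T (pderiv (i, (0 : Fin D → ℤ)) (X (a, (0 : Fin D → ℤ)))))
        = if i = a then (if j = b then P b a T else 0) else 0 := by
      intro i j
      by_cases hi : i = a
      · by_cases hj : j = b
        · subst hi; subst hj
          simp [pderiv_X_self, Sh_zero]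
        · have : ((b, (0 : Fin D → ℤ)) : Fin ℓ × (Fin D → ℤ)) ≠ (j, 0) := by
            simp [Ne, Prod.ext_iff]; exact fun h => (hj h.symm).elim
          simp [pderiv_X_of_ne this, hi, hj]
      · have : ((a, (0 : Fin D → ℤ)) : Fin ℓ × (Fin D → ℤ)) ≠ (i, 0) := by
          simp [Ne, Prod.ext_iff]; exact fun h => (hi h.symm).elim
        simp [pderiv_X_of_ne this, hi]
    simp only [Finset.sum_singleton, key]
    simp
  · intro i j M N hne
    constructor
    · by_contra hM
      apply hne
      have : ((a, (0 : Fin D → ℤ)) : Fin ℓ × (Fin D → ℤ)) ≠ (i, M) := by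
        simp only [Finset.mem_singleton] at hM
        simp [Ne, Prod.ext_iff]; exact fun _ h => hM h.symm
      rw [pderiv_X_of_ne this, map_zero, mul_zero]
    · by_contra hN
      apply hne
      have : ((b, (0 : Fin D → ℤ)) : Fin ℓ × (Fin D → ℤ)) ≠ (j, N) := by
        simp only [Finset.mem_singleton] at hN
        simp [Ne, Prod.ext_iff]; exact fun _ h => hN h.symm
      rw [pderiv_X_of_ne this, zero_mul, zero_mul]


/-- the master-formula λ-bracket is skewsymmetric
(`B_{−T}(g,f) = −S^{−T}(B_T(f,g))` for all `f,g,T`) if and only if skewsymmetry holds on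
generators (`P^{ji}_{−T} = −S^{−T}(P^{ij}_T)` for all `i,j,T`). -/
theorem master_skewsymmetric_iff (ℓ D : ℕ) (P : Fin ℓ → Fin ℓ → (Fin D → ℤ) → A ℓ D)
    (hP : FinSupp P) :
    (∀ (f g : A ℓ D) (T : Fin D → ℤ), B P (-T) g f = - Sh (-T) (B P T f g)) ↔
    (∀ (i j : Fin ℓ) (T : Fin D → ℤ), P j i (-T) = - Sh (-T) (P i j T)) := by
  constructor
  · intro h i j T
    have := h (X (j, 0)) (X (i, 0)) T
    rwa [B_gen, B_gen] at this
  · intro h f g T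
    classical
    set Sf : Finset (Fin D → ℤ) := f.vars.image Prod.snd with hSfdef
    set Sg : Finset (Fin D → ℤ) := g.vars.image Prod.snd with hSgdef
    have hf : ∀ (i : Fin ℓ) (M : Fin D → ℤ), pderiv (i, M) f ≠ 0 → M ∈ Sf := by
      intro i M hne
      refine Finset.mem_image.2 ⟨(i, M), ?_, rfl⟩
      by_contra hv
      exact hne (pderiv_eq_zero_of_notMem_vars hv)
    have hg : ∀ (i : Fin ℓ) (M : Fin D → ℤ), pderiv (i, M) g ≠ 0 → M ∈ Sg := by
      intro i M hne
      refine Finset.mem_image.2 ⟨(i, M), ?_, rfl⟩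
      by_contra hv
      exact hne (pderiv_eq_zero_of_notMem_vars hv)
    have hL : B P (-T) g f = ∑ i : Fin ℓ, ∑ j : Fin ℓ, ∑ M ∈ Sg, ∑ N ∈ Sf,
        (pderiv (j, N) f) * (Sh N (P j i (-T - N + M))) * (Sh (-T) (pderiv (i, M) g)) := by
      rw [B]
      refine finsum4 _ _ _ (fun i j M N hne => ⟨?_, ?_⟩)
      · by_contra hM
        apply hne
        have : pderiv (i, M) g = 0 := by
          by_contra h0; exact hM (hg i M h0)
        rw [this, map_zero, mul_zero]
      · by_contra hN
        apply hne
        have : pderiv (j, N) f = 0 := by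
          by_contra h0; exact hN (hf j N h0)
        rw [this, zero_mul, zero_mul]
    have hR : B P T f g = ∑ i : Fin ℓ, ∑ j : Fin ℓ, ∑ M ∈ Sf, ∑ N ∈ Sg,
        (pderiv (j, N) g) * (Sh N (P j i (T - N + M))) * (Sh T (pderiv (i, M) f)) := by
      rw [B]
      refine finsum4 _ _ _ (fun i j M N hne => ⟨?_, ?_⟩)
      · by_contra hM
        apply hne
        have : pderiv (i, M) f = 0 := by
          by_contra h0; exact hM (hf i M h0)
        rw [this, map_zero, mul_zero]
      · by_contra hN
        apply hne
        have : pderiv (j, N) g = 0 := by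
          by_contra h0; exact hN (hg j N h0)
        rw [this, zero_mul, zero_mul]
    rw [hL, hR]
    simp only [map_sum, ← Finset.sum_neg_distrib]
    rw [Finset.sum_comm]
    refine Finset.sum_congr rfl fun a _ => ?_
    refine Finset.sum_congr rfl fun c _ => ?_
    rw [Finset.sum_comm]
    refine Finset.sum_congr rfl fun M _ => ?_
    refine Finset.sum_congr rfl fun N _ => ?_
    -- goal: pderiv (a,M) f * Sh M (P a c (-T - M + N)) * Sh (-T) (pderiv (c,N) g)
    --     = -(Sh (-T) (pderiv (c,N) g * Sh N (P c a (T-N+M)) * Sh T (pderiv (a,M) f)))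
    have e1 : -T - M + N = -(T + M - N) := by abel
    rw [e1, h c a (T + M - N), map_neg, Sh_Sh, map_mul, map_mul, Sh_Sh, Sh_Sh]
    have e2 : -(T + M - N) + M = N + -T := by abel
    have e3 : T + M - N = T - N + M := by abel
    have e4 : T + -T = (0 : Fin D → ℤ) := by abel
    rw [e2, e3, e4, Sh_zero]
    ring


end MPVA
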